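/- There exist real constants C, C' > 0 such that for all n ≥ 2, |F_5(n) − α_5·n| ≤ C·ln(n) + C'; that is, the deviation of F_5 from its linear equivalent grows at most logarithmically. -/

import Mathlib

/-- Fuel-limited version of Hofstadter's recursion:
`Fa k fuel n` equals `F_k n` whenever `fuel ≥ n`. -/
def Fa (k : ℕ) : ℕ → ℕ → ℕ
  | 0, _ => 0
  | _ + 1, 0 => 0
  | fuel + 1, n + 1 => (n + 1) - (Fa k fuel)^[k] n

/-- Hofstadter's function `F_k` : `F k 0 = 0` and `F k n = n - (F k)^[k] (n-1)`
for `n ≥ 1` (since `F_k m ≤ m`, the fuel `n` is always sufficient). -/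
def F (k : ℕ) (n : ℕ) : ℕ := Fa k n n

/-- The function `L_k n = n + (F k)^[k-1] n`. -/
def L (k : ℕ) (n : ℕ) : ℕ := n + (F k)^[k - 1] n


lemma Fa_le (k f n : ℕ) : Fa k f n ≤ n := by
  cases f with
  | zero => simp [Fa]
  | succ f => cases n with
    | zero => simp [Fa]
    | succ n => simpa [Fa] using Nat.sub_le _ _

lemma Fa_eq (k : ℕ) : ∀ n f₁ f₂, n ≤ f₁ → n ≤ f₂ → Fa k f₁ n = Fa k f₂ n := by
  intro n
  induction n using Nat.strong_induction_on with
  | _ n ih =>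
    intro f₁ f₂ h₁ h₂
    match n, f₁, f₂, h₁, h₂ with
    | 0, 0, 0, _, _ => rfl
    | 0, 0, g₂+1, _, _ => rfl
    | 0, g₁+1, 0, _, _ => rfl
    | 0, g₁+1, g₂+1, _, _ => rfl
    | m+1, g₁+1, g₂+1, h₁, h₂ =>
      have hm₁ : m ≤ g₁ := Nat.lt_succ_iff.mp h₁
      have hm₂ : m ≤ g₂ := Nat.lt_succ_iff.mp h₂
      have hiter : ∀ j a, a ≤ m → (Fa k g₁)^[j] a = (Fa k g₂)^[j] a := by
        intro j
        induction j with
        | zero => intro a _; rfl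
        | succ j hj =>
          intro a ha
          rw [Function.iterate_succ_apply, Function.iterate_succ_apply]
          have h1 : Fa k g₁ a = Fa k g₂ a :=
            ih a (Nat.lt_succ_of_le ha) g₁ g₂ (le_trans ha hm₁) (le_trans ha hm₂)
          rw [h1]
          exact hj _ (le_trans (Fa_le k g₂ a) ha)
      show (m+1) - (Fa k g₁)^[k] m = (m+1) - (Fa k g₂)^[k] m
      rw [hiter k m le_rfl]

lemma F_le (k n : ℕ) : F k n ≤ n := Fa_le k n n

lemma F_zero (k : ℕ) : F k 0 = 0 := rfl

lemma iterate_F_le (k : ℕ) : ∀ i a, (F k)^[i] a ≤ a := by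
  intro i
  induction i with
  | zero => intro a; rfl
  | succ i ih => intro a; rw [Function.iterate_succ_apply]
                 exact le_trans (ih _) (F_le k a)

lemma F_succ (k n : ℕ) : F k (n+1) = (n+1) - (F k)^[k] n := by
  show Fa k (n+1) (n+1) = (n+1) - (F k)^[k] n
  have hiter : ∀ j a, a ≤ n → (Fa k n)^[j] a = (F k)^[j] a := by
    intro j
    induction j with
    | zero => intro a _; rfl
    | succ j hj =>
      intro a ha
      rw [Function.iterate_succ_apply, Function.iterate_succ_apply]
      have h1 : Fa k n a = F k a := Fa_eq k a n a ha le_rfl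
      rw [h1]
      exact hj _ (le_trans (F_le k a) ha)
  show (n+1) - (Fa k n)^[k] n = (n+1) - (F k)^[k] n
  rw [hiter k n le_rfl]

lemma iterate_F_zero (k i : ℕ) : (F k)^[i] 0 = 0 :=
  Function.iterate_fixed (F_zero k) i

lemma F_one (k : ℕ) : F k 1 = 1 := by
  rw [F_succ, iterate_F_zero]

lemma F_step (k : ℕ) : ∀ n, F k (n+1) = F k n ∨ F k (n+1) = F k n + 1 := by
  intro n
  induction n using Nat.strong_induction_on with
  | _ n ih =>
    cases n with
    | zero => right; rw [F_one, F_zero]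
    | succ m =>
      -- compare F (m+2) and F (m+1)
      have claim : ∀ i, (F k)^[i] (m+1) = (F k)^[i] m ∨
          (F k)^[i] (m+1) = (F k)^[i] m + 1 := by
        intro i
        induction i with
        | zero => right; rfl
        | succ i hi =>
          rw [Function.iterate_succ_apply', Function.iterate_succ_apply']
          rcases hi with h | h
          · left; rw [h]
          · rw [h]
            have ha : (F k)^[i] m ≤ m := iterate_F_le k i m
            exact ih _ (Nat.lt_succ_of_le ha)
      have h1 := F_succ k (m+1)
      have h2 := F_succ k m
      have h3 : (F k)^[k] m ≤ m := iterate_F_le k k m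
      rcases claim k with h | h
      · right; omega
      · left; omega

lemma F_mono (k : ℕ) : Monotone (F k) := by
  apply monotone_nat_of_le_succ
  intro n
  rcases F_step k n with h | h <;> omega

lemma F_lip (k : ℕ) : ∀ j a, F k (a + j) ≤ F k a + j := by
  intro j
  induction j with
  | zero => intro a; simp
  | succ j ih =>
    intro a
    have := ih a
    rcases F_step k (a + j) with h | h <;>
      · rw [show a + (j+1) = (a+j)+1 by ring, h]; omega

lemma F_pred_ge (k a : ℕ) : F k a ≤ F k (a - 1) + 1 := by
  cases a with
  | zero => simp
  | succ a => simpa using F_lip k 1 a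

lemma iterate_F_mono (k i : ℕ) : Monotone ((F k)^[i]) := (F_mono k).iterate i

lemma iterate_F_lip (k : ℕ) : ∀ i a, (F k)^[i] (a + 1) ≤ (F k)^[i] a + 1 := by
  intro i
  induction i with
  | zero => intro a; simp
  | succ i ih =>
    intro a
    rw [Function.iterate_succ_apply', Function.iterate_succ_apply']
    calc F k ((F k)^[i] (a+1)) ≤ F k ((F k)^[i] a + 1) := F_mono k (ih a)
      _ ≤ F k ((F k)^[i] a) + 1 := by simpa using F_lip k 1 ((F k)^[i] a)

def A : ℕ → ℕ
  | 0 => 1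
  | 1 => 2
  | 2 => 3
  | 3 => 4
  | 4 => 5
  | n+5 => A (n+4) + A n

lemma A_rec (n : ℕ) : A (n+5) = A (n+4) + A n := by rw [A]

lemma A_pos : ∀ n, 0 < A n
  | 0 => by simp [A]
  | 1 => by simp [A]
  | 2 => by simp [A]
  | 3 => by simp [A]
  | 4 => by simp [A]
  | n+5 => by rw [A_rec]; exact Nat.add_pos_left (A_pos (n+4)) _

lemma A_lt_succ : ∀ n, A n < A (n+1)
  | 0 => by norm_num [A]
  | 1 => by norm_num [A]
  | 2 => by norm_num [A]
  | 3 => by norm_num [A]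
  | n+4 => by
      rw [show n+4+1 = n+5 by ring, A_rec]
      have := A_pos n
      omega

lemma A_strictMono : StrictMono A := strictMono_nat_of_lt_succ A_lt_succ

lemma A_ge (n : ℕ) : n + 1 ≤ A n := by
  induction n with
  | zero => simp [A]
  | succ n ih => have := A_lt_succ n; omega

lemma A_pow (j : ℕ) : 2^j ≤ A (5*j) := by
  induction j with
  | zero => simp [A]
  | succ j ih =>
    have h : A (5*j+5) = A (5*j+4) + A (5*j) := A_rec _
    have h2 : A (5*j) ≤ A (5*j+4) := A_strictMono.monotone (by omega)
    have : 5 * (j+1) = 5*j+5 := by ring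
    rw [this, h, pow_succ]
    omega

lemma it5 (f : ℕ → ℕ) (a : ℕ) : f^[5] a = f (f (f (f (f a)))) := rfl

lemma Av0 : A 0 = 1 := rfl
lemma Av1 : A 1 = 2 := rfl
lemma Av2 : A 2 = 3 := rfl
lemma Av3 : A 3 = 4 := rfl
lemma Av4 : A 4 = 5 := rfl
lemma Av5 : A 5 = 6 := by rw [show (5:ℕ) = 0+5 from rfl, A_rec, Av4, Av0]
lemma Av6 : A 6 = 8 := by rw [show (6:ℕ) = 1+5 from rfl, A_rec, Av5, Av1]
lemma Av7 : A 7 = 11 := by rw [show (7:ℕ) = 2+5 from rfl, A_rec, Av6, Av2]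
lemma Av8 : A 8 = 15 := by rw [show (8:ℕ) = 3+5 from rfl, A_rec, Av7, Av3]
lemma Av9 : A 9 = 20 := by rw [show (9:ℕ) = 4+5 from rfl, A_rec, Av8, Av4]
lemma Fv0 : F 5 0 = 0 := rfl
lemma Fv1 : F 5 1 = 1 := F_one 5
lemma Fv2 : F 5 2 = 1 := by rw [show (2:ℕ) = 1+1 from rfl, F_succ, it5, Fv1, Fv1, Fv1, Fv1, Fv1]
lemma Fv3 : F 5 3 = 2 := by rw [show (3:ℕ) = 2+1 from rfl, F_succ, it5, Fv2, Fv1, Fv1, Fv1, Fv1]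
lemma Fv4 : F 5 4 = 3 := by rw [show (4:ℕ) = 3+1 from rfl, F_succ, it5, Fv3, Fv2, Fv1, Fv1, Fv1]
lemma Fv5 : F 5 5 = 4 := by rw [show (5:ℕ) = 4+1 from rfl, F_succ, it5, Fv4, Fv3, Fv2, Fv1, Fv1]
lemma Fv6 : F 5 6 = 5 := by rw [show (6:ℕ) = 5+1 from rfl, F_succ, it5, Fv5, Fv4, Fv3, Fv2, Fv1]
lemma Fv7 : F 5 7 = 6 := by rw [show (7:ℕ) = 6+1 from rfl, F_succ, it5, Fv6, Fv5, Fv4, Fv3, Fv2]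
lemma Fv8 : F 5 8 = 6 := by rw [show (8:ℕ) = 7+1 from rfl, F_succ, it5, Fv7, Fv6, Fv5, Fv4, Fv3]
lemma Fv9 : F 5 9 = 7 := by rw [show (9:ℕ) = 8+1 from rfl, F_succ, it5, Fv8, Fv6, Fv5, Fv4, Fv3]
lemma Fv10 : F 5 10 = 7 := by rw [show (10:ℕ) = 9+1 from rfl, F_succ, it5, Fv9, Fv7, Fv6, Fv5, Fv4]
lemma Fv11 : F 5 11 = 8 := by rw [show (11:ℕ) = 10+1 from rfl, F_succ, it5, Fv10, Fv7, Fv6, Fv5, Fv4]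
lemma Fv12 : F 5 12 = 9 := by rw [show (12:ℕ) = 11+1 from rfl, F_succ, it5, Fv11, Fv8, Fv6, Fv5, Fv4]
lemma Fv13 : F 5 13 = 9 := by rw [show (13:ℕ) = 12+1 from rfl, F_succ, it5, Fv12, Fv9, Fv7, Fv6, Fv5]
lemma Fv14 : F 5 14 = 10 := by rw [show (14:ℕ) = 13+1 from rfl, F_succ, it5, Fv13, Fv9, Fv7, Fv6, Fv5]
lemma Fv15 : F 5 15 = 11 := by rw [show (15:ℕ) = 14+1 from rfl, F_succ, it5, Fv14, Fv10, Fv7, Fv6, Fv5]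
lemma Fv16 : F 5 16 = 12 := by rw [show (16:ℕ) = 15+1 from rfl, F_succ, it5, Fv15, Fv11, Fv8, Fv6, Fv5]

lemma key_base : ∀ m < 4, ∀ x ≤ A m, F 5 (A (m+4) + x) = A (m+3) + F 5 x := by
  intro m hm x hx
  interval_cases m <;>
    simp only [Av0, Av1, Av2, Av3, Av4, Av5, Av6, Av7, Av8, Av9] at hx ⊢ <;>
    interval_cases x <;> norm_num [Fv0, Fv1, Fv2, Fv3, Fv4, Fv5, Fv6, Fv7, Fv8, Fv9, Fv10, Fv11, Fv12, Fv13, Fv14, Fv15, Fv16, Av0, Av1, Av2, Av3, Av4, Av5, Av6, Av7, Av8, Av9]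

lemma key : ∀ n m x, n = A (m+4) + x → x ≤ A m → F 5 n = A (m+3) + F 5 x := by
  intro n
  induction n using Nat.strong_induction_on with
  | _ n ih =>
    have hFA : ∀ j, A (j+1) < n → F 5 (A (j+1)) = A j := by
      intro j hj
      match j, hj with
      | 0, _ => norm_num [Av0, Av1, Fv2]
      | 1, _ => norm_num [Av1, Av2, Fv3]
      | 2, _ => norm_num [Av2, Av3, Fv4]
      | p+3, hj =>
        have h := ih (A (p+4)) hj p 0 (by norm_num) (Nat.zero_le _)
        simpa [F_zero] using h
    intro m x hn hx
    by_cases hm : m < 4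
    · subst hn; exact key_base m hm x hx
    · push_neg at hm
      cases x with
      | zero =>
        by_cases hm4 : m = 4
        · subst hm4 hn
          norm_num [Av7, Av8, Fv15, F_zero]
        · -- m ≥ 5
          obtain ⟨p, rfl⟩ : ∃ p, m = p + 5 := ⟨m - 5, by omega⟩
          simp only [show p+5+4 = p+9 from by omega] at hn
          simp only [show p+5+3 = p+8 from by omega]
          have hApos : 1 ≤ A (p+4) := A_pos _
          have hArec : A (p+9) = A (p+8) + A (p+4) := A_rec (p+4)
          have hnpos : 1 ≤ n := by have := A_pos (p+9); omega
          have hn1 : n - 1 = A (p+8) + (A (p+4) - 1) := by omega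
          have hlt1 : n - 1 < n := by omega
          -- z0 = A(p+4) - 1
          have c1 : F 5 (n-1) = A (p+7) + F 5 (A (p+4) - 1) :=
            ih (n-1) hlt1 (p+4) (A (p+4) - 1) hn1 (Nat.sub_le _ _)
          -- F at A-points below n
          have hA4lt : A (p+4) < n := by
            have := A_strictMono (show p+4 < p+9 by omega); omega
          have hA3lt : A (p+3) < n := by
            have := A_strictMono (show p+3 < p+4 by omega); omega
          have hA2lt : A (p+2) < n := by
            have := A_strictMono (show p+2 < p+3 by omega); omega
          have hA1lt : A (p+1) < n := by
            have := A_strictMono (show p+1 < p+2 by omega); omega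
          have hFA4 : F 5 (A (p+4)) = A (p+3) := hFA (p+3) hA4lt
          have hFA3 : F 5 (A (p+3)) = A (p+2) := hFA (p+2) hA3lt
          have hFA2 : F 5 (A (p+2)) = A (p+1) := hFA (p+1) hA2lt
          have hFA1 : F 5 (A (p+1)) = A p := hFA p hA1lt
          -- bounds on the z-chain
          have hz1 : F 5 (A (p+4) - 1) ≤ A (p+3) := by
            calc F 5 (A (p+4) - 1) ≤ F 5 (A (p+4)) := F_mono 5 (Nat.sub_le _ _)
              _ = A (p+3) := hFA4
          have hz2 : F 5 (F 5 (A (p+4) - 1)) ≤ A (p+2) := by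
            calc F 5 (F 5 (A (p+4) - 1)) ≤ F 5 (A (p+3)) := F_mono 5 hz1
              _ = A (p+2) := hFA3
          have hz3 : F 5 (F 5 (F 5 (A (p+4) - 1))) ≤ A (p+1) := by
            calc F 5 (F 5 (F 5 (A (p+4) - 1))) ≤ F 5 (A (p+2)) := F_mono 5 hz2
              _ = A (p+1) := hFA2
          have hz4 : F 5 (F 5 (F 5 (F 5 (A (p+4) - 1)))) ≤ A p := by
            calc F 5 (F 5 (F 5 (F 5 (A (p+4) - 1)))) ≤ F 5 (A (p+1)) := F_mono 5 hz3
              _ = A p := hFA1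
          -- chain of block applications
          have hb1 : A (p+7) + F 5 (A (p+4) - 1) ≤ n - 1 := by
            rw [← c1]; exact le_trans (F_le 5 (n-1)) le_rfl
          have c2 : F 5 (A (p+7) + F 5 (A (p+4) - 1))
              = A (p+6) + F 5 (F 5 (A (p+4) - 1)) :=
            ih _ (by omega) (p+3) _ rfl hz1
          have hb2 : A (p+6) + F 5 (F 5 (A (p+4) - 1)) ≤ n - 1 := by
            rw [← c2]; exact le_trans (F_le 5 _) hb1
          have c3 : F 5 (A (p+6) + F 5 (F 5 (A (p+4) - 1)))
              = A (p+5) + F 5 (F 5 (F 5 (A (p+4) - 1))) :=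
            ih _ (by omega) (p+2) _ rfl hz2
          have hb3 : A (p+5) + F 5 (F 5 (F 5 (A (p+4) - 1))) ≤ n - 1 := by
            rw [← c3]; exact le_trans (F_le 5 _) hb2
          have c4 : F 5 (A (p+5) + F 5 (F 5 (F 5 (A (p+4) - 1))))
              = A (p+4) + F 5 (F 5 (F 5 (F 5 (A (p+4) - 1)))) :=
            ih _ (by omega) (p+1) _ rfl hz3
          have hb4 : A (p+4) + F 5 (F 5 (F 5 (F 5 (A (p+4) - 1)))) ≤ n - 1 := by
            rw [← c4]; exact le_trans (F_le 5 _) hb3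
          have c5 : F 5 (A (p+4) + F 5 (F 5 (F 5 (F 5 (A (p+4) - 1)))))
              = A (p+3) + F 5 (F 5 (F 5 (F 5 (F 5 (A (p+4) - 1))))) :=
            ih _ (by omega) p _ rfl hz4
          -- recursion at A (p+4)
          have hrecA : F 5 (A (p+4)) = A (p+4) - (F 5)^[5] (A (p+4) - 1) := by
            have h := F_succ 5 (A (p+4) - 1)
            rw [show A (p+4) - 1 + 1 = A (p+4) by omega] at h
            exact h
          have hit : (F 5)^[5] (A (p+4) - 1)
              = F 5 (F 5 (F 5 (F 5 (F 5 (A (p+4) - 1))))) := it5 _ _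
          have hitle : (F 5)^[5] (A (p+4) - 1) ≤ A (p+4) - 1 := iterate_F_le 5 5 _
          -- F n
          have hFn : F 5 n = n - (F 5)^[5] (n-1) := by
            have h := F_succ 5 (n-1)
            rw [show n - 1 + 1 = n by omega] at h
            exact h
          have hit2 : (F 5)^[5] (n-1)
              = A (p+3) + F 5 (F 5 (F 5 (F 5 (F 5 (A (p+4) - 1))))) := by
            rw [it5, c1, c2, c3, c4, c5]
          have hA34 : A (p+3) ≤ A (p+4) :=
            (A_strictMono (show p+3 < p+4 by omega)).le
          rw [hit] at hitle hrecA
          rw [hit2] at hFn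
          simp only [F_zero]
          omega
      | succ y =>
        obtain ⟨p, rfl⟩ : ∃ p, m = p + 4 := ⟨m - 4, by omega⟩
        simp only [show p+4+4 = p+8 from by omega] at hn
        simp only [show p+4+3 = p+7 from by omega]
        have hArec : A (p+8) = A (p+7) + A (p+3) := A_rec (p+3)
        have hnpos : 1 ≤ n := by have := A_pos (p+8); omega
        have hn1 : n - 1 = A (p+8) + y := by omega
        have hlt1 : n - 1 < n := by omega
        have hy : y ≤ A (p+4) := by omega
        have c1 : F 5 (n-1) = A (p+7) + F 5 y := ih (n-1) hlt1 (p+4) y hn1 hy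
        have hA4lt : A (p+4) < n := by
          have h1 := A_strictMono (show p+4 < p+8 by omega)
          omega
        have hA3lt : A (p+3) < n := by
          have := A_strictMono (show p+3 < p+4 by omega); omega
        have hA2lt : A (p+2) < n := by
          have := A_strictMono (show p+2 < p+3 by omega); omega
        have hA1lt : A (p+1) < n := by
          have := A_strictMono (show p+1 < p+2 by omega); omega
        have hFA4 : F 5 (A (p+4)) = A (p+3) := hFA (p+3) hA4lt
        have hFA3 : F 5 (A (p+3)) = A (p+2) := hFA (p+2) hA3lt
        have hFA2 : F 5 (A (p+2)) = A (p+1) := hFA (p+1) hA2lt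
        have hFA1 : F 5 (A (p+1)) = A p := hFA p hA1lt
        have hy1 : F 5 y ≤ A (p+3) := by
          calc F 5 y ≤ F 5 (A (p+4)) := F_mono 5 hy
            _ = A (p+3) := hFA4
        have hy2 : F 5 (F 5 y) ≤ A (p+2) := by
          calc F 5 (F 5 y) ≤ F 5 (A (p+3)) := F_mono 5 hy1
            _ = A (p+2) := hFA3
        have hy3 : F 5 (F 5 (F 5 y)) ≤ A (p+1) := by
          calc F 5 (F 5 (F 5 y)) ≤ F 5 (A (p+2)) := F_mono 5 hy2
            _ = A (p+1) := hFA2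
        have hy4 : F 5 (F 5 (F 5 (F 5 y))) ≤ A p := by
          calc F 5 (F 5 (F 5 (F 5 y))) ≤ F 5 (A (p+1)) := F_mono 5 hy3
            _ = A p := hFA1
        have hb1 : A (p+7) + F 5 y ≤ n - 1 := by
          rw [← c1]; exact F_le 5 (n-1)
        have c2 : F 5 (A (p+7) + F 5 y) = A (p+6) + F 5 (F 5 y) :=
          ih _ (by omega) (p+3) _ rfl hy1
        have hb2 : A (p+6) + F 5 (F 5 y) ≤ n - 1 := by
          rw [← c2]; exact le_trans (F_le 5 _) hb1
        have c3 : F 5 (A (p+6) + F 5 (F 5 y)) = A (p+5) + F 5 (F 5 (F 5 y)) :=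
          ih _ (by omega) (p+2) _ rfl hy2
        have hb3 : A (p+5) + F 5 (F 5 (F 5 y)) ≤ n - 1 := by
          rw [← c3]; exact le_trans (F_le 5 _) hb2
        have c4 : F 5 (A (p+5) + F 5 (F 5 (F 5 y)))
            = A (p+4) + F 5 (F 5 (F 5 (F 5 y))) :=
          ih _ (by omega) (p+1) _ rfl hy3
        have hb4 : A (p+4) + F 5 (F 5 (F 5 (F 5 y))) ≤ n - 1 := by
          rw [← c4]; exact le_trans (F_le 5 _) hb3
        have c5 : F 5 (A (p+4) + F 5 (F 5 (F 5 (F 5 y))))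
            = A (p+3) + F 5 (F 5 (F 5 (F 5 (F 5 y)))) :=
          ih _ (by omega) p _ rfl hy4
        have hFy : F 5 (y+1) = (y+1) - (F 5)^[5] y := F_succ 5 y
        have hity : (F 5)^[5] y = F 5 (F 5 (F 5 (F 5 (F 5 y)))) := it5 _ _
        have hityle : (F 5)^[5] y ≤ y := iterate_F_le 5 5 _
        have hFn : F 5 n = n - (F 5)^[5] (n-1) := by
          have h := F_succ 5 (n-1)
          rw [show n - 1 + 1 = n by omega] at h
          exact h
        have hit2 : (F 5)^[5] (n-1)
            = A (p+3) + F 5 (F 5 (F 5 (F 5 (F 5 y)))) := by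
          rw [it5, c1, c2, c3, c4, c5]
        rw [hity] at hityle hFy
        rw [hit2] at hFn
        omega

noncomputable def tt (α : ℝ) (n : ℕ) : ℝ := (A n : ℝ) - α * (A (n+1) : ℝ)

noncomputable def ww (α : ℝ) (n : ℕ) : ℝ := tt α (n+2) - tt α (n+1) + tt α n

noncomputable def VV (α : ℝ) (n : ℕ) : ℝ :=
  α * (ww α (n+1))^2 + ww α n * ww α (n+1) + α^2 * (ww α n)^2

section Anal
variable {α : ℝ} (h0 : 0 < α) (h1 : (3:ℝ)/4 ≤ α) (h2 : α ≤ 19/25)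
  (hc : α^3 + α^2 = 1)

lemma AcastRec (n : ℕ) : ((A (n+5) : ℝ)) = (A (n+4) : ℝ) + (A n : ℝ) := by
  exact_mod_cast A_rec n

lemma tt_rec (n : ℕ) : tt α (n+5) = tt α (n+4) + tt α n := by
  have e1 : ((A (n+5) : ℝ)) = (A (n+4) : ℝ) + (A n : ℝ) := AcastRec n
  have e2 : ((A (n+6) : ℝ)) = (A (n+5) : ℝ) + (A (n+1) : ℝ) := by
    have h' : A (n+6) = A (n+5) + A (n+1) := by
      simpa [show n+1+5 = n+6 from by omega, show n+1+4 = n+5 from by omega]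
        using A_rec (n+1)
    exact_mod_cast h'
  show (A (n+5) : ℝ) - α * (A (n+5+1) : ℝ)
      = ((A (n+4) : ℝ) - α * (A (n+4+1) : ℝ)) + ((A n : ℝ) - α * (A (n+1) : ℝ))
  have e5 : n+5+1 = n+6 := by omega
  have e4 : n+4+1 = n+5 := by omega
  rw [e5, e4]
  linear_combination e1 - α * e2

lemma ww_rec (n : ℕ) : ww α (n+3) = ww α (n+1) + ww α n := by
  show tt α (n+3+2) - tt α (n+3+1) + tt α (n+3)
      = (tt α (n+1+2) - tt α (n+1+1) + tt α (n+1)) + (tt α (n+2) - tt α (n+1) + tt α n)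
  have e1 : n+3+2 = n+5 := by omega
  have e2 : n+3+1 = n+4 := by omega
  have e3 : n+1+2 = n+3 := by omega
  have e4 : n+1+1 = n+2 := by omega
  rw [e1, e2, e3, e4, tt_rec n]
  ring

include h0 hc in
lemma ww_step : ∀ n, α * ww α (n+2) + ww α (n+1) + α^2 * ww α n = 0 := by
  have base : α * ww α 2 + ww α 1 + α^2 * ww α 0 = 0 := by
    have w0 : ww α 0 = 2 - 3*α := by
      show tt α 2 - tt α 1 + tt α 0 = 2 - 3*α
      show ((A 2 : ℝ) - α * (A (2+1) : ℝ)) - ((A 1 : ℝ) - α * (A (1+1) : ℝ))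
          + ((A 0 : ℝ) - α * (A (0+1) : ℝ)) = 2 - 3*α
      norm_num [Av0, Av1, Av2, Av3]
      ring
    have w1 : ww α 1 = 3 - 4*α := by
      show ((A 3 : ℝ) - α * (A (1+2+1) : ℝ)) - ((A 2 : ℝ) - α * (A (1+1+1) : ℝ))
          + ((A 1 : ℝ) - α * (A (1+1) : ℝ)) = 3 - 4*α
      norm_num [Av1, Av2, Av3, Av4]
      ring
    have w2 : ww α 2 = 4 - 5*α := by
      show ((A 4 : ℝ) - α * (A (2+2+1) : ℝ)) - ((A 3 : ℝ) - α * (A (2+1+1) : ℝ))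
          + ((A 2 : ℝ) - α * (A (2+1) : ℝ)) = 4 - 5*α
      norm_num [Av2, Av3, Av4, Av5]
      ring
    rw [w0, w1, w2]
    linear_combination (-3 : ℝ) * hc
  intro n
  induction n with
  | zero => exact base
  | succ n ihn =>
    have hw3 : ww α (n+3) = ww α (n+1) + ww α n := ww_rec n
    have key : α * (α * ww α (n+1+2) + ww α (n+1+1) + α^2 * ww α (n+1))
        = α * ww α (n+2) + ww α (n+1) + α^2 * ww α n := by
      have e1 : n+1+2 = n+3 := by omega
      have e2 : n+1+1 = n+2 := by omega
      rw [e1, e2, hw3]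
      linear_combination (ww α (n+1)) * hc
    have := key.trans ihn
    have hα : α ≠ 0 := ne_of_gt h0
    exact (mul_eq_zero.mp this).resolve_left hα

include h0 hc in
lemma VV_step (n : ℕ) : VV α (n+1) = α * VV α n := by
  have hs := ww_step h0 hc n
  have hα : α ≠ 0 := ne_of_gt h0
  have hw2 : ww α (n+2) = -(ww α (n+1))/α - α * ww α n := by
    field_simp
    linarith [hs]
  show α * (ww α (n+1+1))^2 + ww α (n+1) * ww α (n+1+1) + α^2 * (ww α (n+1))^2
      = α * (α * (ww α (n+1))^2 + ww α n * ww α (n+1) + α^2 * (ww α n)^2)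
  have e : n+1+1 = n+2 := by omega
  rw [e, hw2]
  field_simp
  ring

include h0 hc in
lemma VV_eq (n : ℕ) : VV α n = α^n * VV α 0 := by
  induction n with
  | zero => simp
  | succ n ihn => rw [VV_step h0 hc, ihn, pow_succ]; ring

include h0 h1 h2 hc in
lemma ww_sq (n : ℕ) : (ww α n)^2 ≤ α^n := by
  have hpsd : (4*α^3 - 1) * (ww α n)^2 ≤ 4*α * VV α n := by
    simp only [VV]
    nlinarith [sq_nonneg (2*α*(ww α (n+1)) + ww α n)]
  have hV0 : 4*α * VV α 0 ≤ 4*α^3 - 1 := by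
    have w0 : ww α 0 = 2 - 3*α := by
      show ((A 2 : ℝ) - α * (A (2+1) : ℝ)) - ((A 1 : ℝ) - α * (A (1+1) : ℝ))
          + ((A 0 : ℝ) - α * (A (0+1) : ℝ)) = 2 - 3*α
      norm_num [Av0, Av1, Av2, Av3]; ring
    have w1 : ww α 1 = 3 - 4*α := by
      show ((A 3 : ℝ) - α * (A (1+2+1) : ℝ)) - ((A 2 : ℝ) - α * (A (1+1+1) : ℝ))
          + ((A 1 : ℝ) - α * (A (1+1) : ℝ)) = 3 - 4*α
      norm_num [Av1, Av2, Av3, Av4]; ring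
    show 4*α * (α * (ww α (0+1))^2 + ww α 0 * ww α (0+1) + α^2 * (ww α 0)^2) ≤ 4*α^3 - 1
    rw [show (0:ℕ)+1 = 1 from rfl, w0, w1]
    nlinarith [hc, h1, h2]
  have hVn : VV α n = α^n * VV α 0 := VV_eq h0 hc n
  have hαn : (0:ℝ) < α^n := pow_pos h0 n
  have h4 : (0:ℝ) < 4*α^3 - 1 := by nlinarith
  have h5 : (4*α^3 - 1) * (ww α n)^2 ≤ (4*α^3 - 1) * α^n := by
    rw [hVn] at hpsd
    nlinarith
  exact (mul_le_mul_iff_right₀ h4).mp h5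

include h0 h1 h2 hc in
lemma ww_abs (q m : ℕ) (hm : 6*q ≤ m) : |ww α m| ≤ (1/2)^q := by
  have h6 : α^6 ≤ (1/4 : ℝ) := by nlinarith [hc, h1, h2, sq_nonneg α, sq_nonneg (α^2)]
  have hsq := ww_sq h0 h1 h2 hc m
  have hle : α^m ≤ α^(6*q) := by
    apply pow_le_pow_of_le_one (le_of_lt h0) (by linarith) hm
  have h2q : α^(6*q) ≤ ((1/2:ℝ)^q)^2 := by
    have e : α^(6*q) = (α^6)^q := by rw [← pow_mul]
    have e2 : ((1/2:ℝ)^q)^2 = ((1/4:ℝ))^q := by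
      rw [← pow_mul, show q*2 = 2*q from Nat.mul_comm q 2, pow_mul]
      norm_num
    rw [e, e2]
    exact pow_le_pow_left₀ (by positivity) h6 q
  have hfin : (ww α m)^2 ≤ ((1/2:ℝ)^q)^2 := le_trans hsq (le_trans hle h2q)
  have hpos : (0:ℝ) ≤ (1/2:ℝ)^q := by positivity
  nlinarith [abs_nonneg (ww α m), sq_abs (ww α m)]

lemma tt_six (n : ℕ) : tt α (n+6)
    = tt α n - ww α n - ww α (n+1) + ww α (n+3) + ww α (n+4) := by
  show tt α (n+6) = tt α n - (tt α (n+2) - tt α (n+1) + tt α n)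
      - (tt α (n+1+2) - tt α (n+1+1) + tt α (n+1))
      + (tt α (n+3+2) - tt α (n+3+1) + tt α (n+3))
      + (tt α (n+4+2) - tt α (n+4+1) + tt α (n+4))
  have e1 : n+1+2 = n+3 := by omega
  have e2 : n+1+1 = n+2 := by omega
  have e3 : n+3+2 = n+5 := by omega
  have e4 : n+3+1 = n+4 := by omega
  have e5 : n+4+2 = n+6 := by omega
  have e6 : n+4+1 = n+5 := by omega
  rw [e1, e2, e3, e4, e5, e6]
  ring

include h0 h1 h2 hc in
lemma tt_small : ∀ i < 6, |tt α i| ≤ 1 := by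
  intro i hi
  interval_cases i <;>
    · simp only [tt]
      norm_num [Av0, Av1, Av2, Av3, Av4, Av5, Av6, Av7]
      rw [abs_le]
      constructor <;> nlinarith

include h0 h1 h2 hc in
lemma tt_block : ∀ q, ∀ i < 6, |tt α (6*q + i)| ≤ 1 + 8 * (1 - (1/2)^q) := by
  intro q
  induction q with
  | zero =>
    intro i hi
    simpa using tt_small h0 h1 h2 hc i hi
  | succ q ihq =>
    intro i hi
    have e : 6*(q+1) + i = (6*q + i) + 6 := by omega
    rw [e, tt_six]
    have hb := ihq i hi
    have hw0 := ww_abs h0 h1 h2 hc q (6*q+i) (by omega)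
    have hw1 := ww_abs h0 h1 h2 hc q (6*q+i+1) (by omega)
    have hw3 := ww_abs h0 h1 h2 hc q (6*q+i+3) (by omega)
    have hw4 := ww_abs h0 h1 h2 hc q (6*q+i+4) (by omega)
    have hps : ((1:ℝ)/2)^(q+1) = (1/2)^q * (1/2) := pow_succ _ _
    have l0 := neg_abs_le (tt α (6*q+i)); have r0 := le_abs_self (tt α (6*q+i))
    have lw0 := neg_abs_le (ww α (6*q+i)); have rw0 := le_abs_self (ww α (6*q+i))
    have lw1 := neg_abs_le (ww α (6*q+i+1)); have rw1 := le_abs_self (ww α (6*q+i+1))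
    have lw3 := neg_abs_le (ww α (6*q+i+3)); have rw3 := le_abs_self (ww α (6*q+i+3))
    have lw4 := neg_abs_le (ww α (6*q+i+4)); have rw4 := le_abs_self (ww α (6*q+i+4))
    rw [abs_le]
    constructor <;> nlinarith

include h0 h1 h2 hc in
lemma tt_bound (n : ℕ) : |tt α n| ≤ 9 := by
  have e : n = 6*(n/6) + n % 6 := (Nat.div_add_mod n 6).symm
  have h := tt_block h0 h1 h2 hc (n/6) (n % 6) (Nat.mod_lt _ (by norm_num))
  rw [← e] at h
  have : (0:ℝ) ≤ (1/2)^(n/6) := by positivity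
  linarith

lemma exists_block (n : ℕ) (hn : 1 ≤ n) : ∃ B, A B ≤ n ∧ n < A (B+1) := by
  classical
  have h0 : A 0 ≤ n := by simpa [Av0] using hn
  refine ⟨Nat.findGreatest (fun B => A B ≤ n) n,
    Nat.findGreatest_spec (P := fun B => A B ≤ n) (Nat.zero_le n) h0, ?_⟩
  by_contra hcon
  push_neg at hcon
  have hBn : Nat.findGreatest (fun B => A B ≤ n) n + 1 ≤ n := by
    have := A_ge (Nat.findGreatest (fun B => A B ≤ n) n + 1)
    omega
  exact Nat.findGreatest_is_greatest (P := fun B => A B ≤ n)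
    (Nat.lt_succ_self _) hBn hcon

include h0 h1 h2 hc in
lemma dd_bound : ∀ B, ∀ n, n < A (B+1) → |(F 5 n : ℝ) - α * n| ≤ 9*B + 10 := by
  intro B
  induction B using Nat.strong_induction_on with
  | _ B ih =>
    intro n hn
    have hBpos : (0:ℝ) ≤ 9*(B:ℝ) := by positivity
    by_cases hsm : n < 6
    · have hF : F 5 n ≤ 5 := le_trans (F_le 5 n) (by omega)
      have hFr : (F 5 n : ℝ) ≤ 5 := by exact_mod_cast hF
      have hn5 : (n:ℝ) ≤ 5 := by exact_mod_cast (show n ≤ 5 by omega)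
      have hge : (0:ℝ) ≤ (F 5 n : ℝ) := by positivity
      have hge2 : (0:ℝ) ≤ (n:ℝ) := by positivity
      rw [abs_le]
      constructor <;> nlinarith
    · obtain ⟨B0, hB0l, hB0r⟩ := exists_block n (by omega)
      have hB05 : 5 ≤ B0 := by
        by_contra hcon
        push_neg at hcon
        have : A (B0+1) ≤ A 5 := A_strictMono.monotone (by omega)
        rw [Av5] at this
        omega
      obtain ⟨p, rfl⟩ : ∃ p, B0 = p + 4 := ⟨B0 - 4, by omega⟩
      have hp1 : 1 ≤ p := by omega
      have hArec : A (p+5) = A (p+4) + A p := A_rec p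
      have hB0r' : n < A (p+4) + A p := by
        have e : p+4+1 = p+5 := by omega
        rw [e, hArec] at hB0r
        exact hB0r
      set x := n - A (p+4) with hxdef
      have hnx : n = A (p+4) + x := by omega
      have hxA : x < A p := by omega
      have hkey : F 5 n = A (p+3) + F 5 x := key n p x hnx (le_of_lt hxA)
      have hpB : p + 4 ≤ B := by
        have hlt : A (p+4) < A (B+1) := lt_of_le_of_lt hB0l hn
        have := A_strictMono.lt_iff_lt.mp hlt
        omega
      have hxA' : x < A ((p-1)+1) := by
        have e : (p-1)+1 = p := by omega
        rw [e]; exact hxA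
      have ihx := ih (p-1) (by omega) x hxA'
      have httv : tt α (p+3) = (A (p+3):ℝ) - α * (A (p+4):ℝ) := by
        simp only [tt, show p+3+1 = p+4 from by omega]
      have htt := tt_bound h0 h1 h2 hc (p+3)
      rw [httv] at htt
      have e : (F 5 n : ℝ) - α * n
          = ((A (p+3):ℝ) - α * (A (p+4):ℝ)) + ((F 5 x : ℝ) - α * x) := by
        rw [hkey, hnx]
        push_cast
        ring
      rw [e]
      have habs := abs_add_le ((A (p+3):ℝ) - α * (A (p+4):ℝ)) ((F 5 x : ℝ) - α * x)
      have hc1 : ((p:ℝ) - 1) = ((p - 1 : ℕ) : ℝ) := by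
        have : (1:ℕ) ≤ p := hp1
        push_cast [this]
        ring
      have hpBr : (p:ℝ) ≤ (B:ℝ) := by exact_mod_cast (by omega : p ≤ B)
      calc |((A (p+3):ℝ) - α * (A (p+4):ℝ)) + ((F 5 x : ℝ) - α * x)|
          ≤ |(A (p+3):ℝ) - α * (A (p+4):ℝ)| + |(F 5 x : ℝ) - α * x| := habs
        _ ≤ 9 + (9*((p-1:ℕ):ℝ) + 10) := by linarith
        _ ≤ 9*B + 10 := by
            rw [← hc1]
            linarith

end Anal


/-- The deviation of `F_5` from its linear equivalent `α_5 n` grows at most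
logarithmically: `|F_5 n - α_5 n| ≤ C ln n + C'` for all `n ≥ 2`. -/
theorem discrepancy_five_log_bound (α : ℝ)
    (hα : α ∈ Set.Ioo (0 : ℝ) 1) (hαroot : α ^ 5 + α - 1 = 0) :
    ∃ C C' : ℝ, 0 < C ∧ 0 < C' ∧
      ∀ n : ℕ, 2 ≤ n → |(F 5 n : ℝ) - α * n| ≤ C * Real.log n + C' := by
  obtain ⟨hα0, hα1⟩ := hα
  have hfac : (α^2 - α + 1) * (α^3 + α^2 - 1) = 0 := by linear_combination hαroot
  have hqpos : (0:ℝ) < α^2 - α + 1 := by nlinarith [sq_nonneg (2*α - 1)]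
  have hc : α^3 + α^2 = 1 := by
    have := (mul_eq_zero.mp hfac).resolve_left (ne_of_gt hqpos)
    linarith
  have h1 : (3:ℝ)/4 ≤ α := by nlinarith [sq_nonneg (α - 3/4), sq_nonneg α]
  have h2 : α ≤ 19/25 := by nlinarith [sq_nonneg (α - 19/25), sq_nonneg α]
  refine ⟨90, 46, by norm_num, by norm_num, ?_⟩
  intro n hn
  set q := Nat.log 2 n with hqdef
  have hq1 : 2^q ≤ n := Nat.pow_log_le_self 2 (by omega)
  have hq2 : n < 2^(q+1) := Nat.lt_pow_succ_log_self (by norm_num) n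
  have hA : n < A (5*q+4+1) := by
    have e : 5*q+4+1 = 5*(q+1) := by ring
    rw [e]
    exact lt_of_lt_of_le hq2 (A_pow (q+1))
  have hdd := dd_bound hα0 h1 h2 hc (5*q+4) n hA
  have hlog : (q:ℝ) * Real.log 2 ≤ Real.log n := by
    have hcast : ((2:ℝ))^q ≤ (n:ℝ) := by exact_mod_cast hq1
    have := Real.log_le_log (by positivity) hcast
    rwa [Real.log_pow] at this
  have hln2 : (1:ℝ)/2 < Real.log 2 := by
    have := Real.log_two_gt_d9
    linarith
  have hqle : (q:ℝ) ≤ 2 * Real.log n := by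
    have hq0 : (0:ℝ) ≤ (q:ℝ) := by positivity
    nlinarith
  have hcast2 : ((5*q+4 : ℕ):ℝ) = 5*(q:ℝ) + 4 := by push_cast; ring
  rw [hcast2] at hdd
  have hlogpos : (0:ℝ) ≤ Real.log n := by
    apply Real.log_nonneg
    exact_mod_cast (by omega : 1 ≤ n)
  linarith
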